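/- Let X be a spherical 2-design in √m S^{m-1} of degree S. Then Harm_j(X) ≠ {0} for all 0 ≤ j ≤ S, and C(X) = ⊕_{i=0}^S Harm_i(X) (orthogonal direct sum with respect to (f,g) = (1/n)∑_{x∈X}f(x)g(x)). -/

import Mathlib

open scoped InnerProductSpace Classical

noncomputable section

variable {V : Type*} [NormedAddCommGroup V] [InnerProductSpace ℝ V]

/-- `X` lies on the sphere of squared radius `m` (radius `√m`). -/
def onSphere (m : ℝ) (X : Finset V) : Prop := ∀ x ∈ X, ⟪x, x⟫_ℝ = m

/-- The normalized Gram matrix `G` of `X`. -/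
def gram (X : Finset V) : Matrix X X ℝ :=
  Matrix.of fun x y => (1 / (X.card : ℝ)) * ⟪(x : V), (y : V)⟫_ℝ

/-- The two conditions characterizing spherical 2-designs: `GJ = 0` and `G² = G`. -/
def IsTwoDesign (X : Finset V) : Prop :=
  (∀ x ∈ X, ∑ y ∈ X, ⟪x, y⟫_ℝ = 0) ∧
  (∀ x ∈ X, ∀ y ∈ X, (1 / (X.card : ℝ)) * ∑ z ∈ X, ⟪x, z⟫_ℝ * ⟪z, y⟫_ℝ = ⟪x, y⟫_ℝ)

/-- `Pol_k(X)`: span of the zonal polynomials of degree at most `k`. -/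
def Pol (X : Finset V) (k : ℕ) : Submodule ℝ (X → ℝ) :=
  Submodule.span ℝ {f | ∃ a ∈ X, ∃ p : Polynomial ℝ,
    p.natDegree ≤ k ∧ f = fun x => p.eval ⟪a, x.1⟫_ℝ}

/-- The inner product `(f,g) = (1/n) ∑ f(x) g(x)` on `C(X)`. -/
def inn (X : Finset V) (f g : X → ℝ) : ℝ := (1 / (X.card : ℝ)) * ∑ x, f x * g x

def innL (X : Finset V) (f : X → ℝ) : (X → ℝ) →ₗ[ℝ] ℝ where
  toFun g := inn X f g
  map_add' g h := by
    simp only [inn, Pi.add_apply, mul_add, Finset.sum_add_distrib]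
  map_smul' c g := by
    simp only [inn, Pi.smul_apply, smul_eq_mul, RingHom.id_apply]
    rw [Finset.sum_congr rfl (fun x _ => by ring : ∀ x ∈ Finset.univ, f x * (c * g x) = c * (f x * g x)),
      ← Finset.mul_sum]
    ring

/-- The orthogonal complement of `W` with respect to `inn`. -/
def perp (X : Finset V) (W : Submodule ℝ (X → ℝ)) : Submodule ℝ (X → ℝ) :=
  ⨅ f ∈ W, LinearMap.ker (innL X f)

/-- The harmonic spaces `Harm_k(X)`. -/
def Harm (X : Finset V) : ℕ → Submodule ℝ (X → ℝ)
  | 0 => Pol X 0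
  | (k+1) => Pol X (k+1) ⊓ perp X (Pol X k)

/-- `F` is the matrix of the orthogonal projection of `C(X)` onto `W`
(with respect to the inner product `inn`). -/
def IsProjOnto (X : Finset V) (W : Submodule ℝ (X → ℝ)) (F : Matrix X X ℝ) : Prop :=
  (∀ f, F.mulVec f ∈ W) ∧ (∀ f ∈ W, F.mulVec f = f) ∧ (∀ f ∈ perp X W, F.mulVec f = 0)

/-- The degree `S` of `X`: the least `i` with `Pol_i(X) = C(X)`. -/
def degS (X : Finset V) : ℕ := sInf {i | Pol X i = ⊤}

/-- `A(X)`, the set of inner products between distinct points of `X`. -/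
def Aset (X : Finset V) : Finset ℝ :=
  ((X ×ˢ X).filter fun p => p.1 ≠ p.2).image fun p => ⟪p.1, p.2⟫_ℝ

/-- `A'(X) = A(X) ∪ {m}`. -/
def Aset' (m : ℝ) (X : Finset V) : Finset ℝ := insert m (Aset X)

/-- `κ_α`, the number of ordered pairs of points of `X` with inner product `α`. -/
def kappa (X : Finset V) (α : ℝ) : ℕ := ((X ×ˢ X).filter fun p => ⟪p.1, p.2⟫_ℝ = α).card

/-- The inner product `⟨p,q⟩ = (1/n²) ∑_{α ∈ A'(X)} κ_α p(α) q(α)` on polynomials. -/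
def pInn (m : ℝ) (X : Finset V) (p q : Polynomial ℝ) : ℝ :=
  (1 / (X.card : ℝ) ^ 2) * ∑ α ∈ Aset' m X, (kappa X α : ℝ) * (p.eval α * q.eval α)

/-- `q` is the family of predegree polynomials of `X`. -/
def IsPredegree (m : ℝ) (X : Finset V) (s : ℕ) (q : ℕ → Polynomial ℝ) : Prop :=
  (∀ k ≤ s, (q k).natDegree = k ∧ q k ≠ 0) ∧
  (∀ k ≤ s, ∀ h ≤ s, pInn m X (q k) (q h) = if k = h then (q k).eval m else 0)

/-- The relation matrix `A_α` of `X`. -/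
def relMat (X : Finset V) (α : ℝ) : Matrix X X ℝ :=
  Matrix.of fun x y => if ⟪(x : V), (y : V)⟫_ℝ = α then 1 else 0

/-- `X` carries the structure of a `Q`-polynomial association scheme with respect to
the idempotents `F_0, …, F_s` (whose relations are given by the inner products). -/
def CarriesQPolyScheme (m : ℝ) (X : Finset V) (s : ℕ) (F : ℕ → Matrix X X ℝ) : Prop :=
  (∀ α ∈ Aset' m X, ∀ β ∈ Aset' m X, relMat X α * relMat X β ∈
      Submodule.span ℝ (relMat X '' (Aset' m X : Set ℝ))) ∧
  (∀ i ≤ s, F i ∈ Submodule.span ℝ (relMat X '' (Aset' m X : Set ℝ))) ∧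
  (∀ i ≤ s, ∀ j ≤ s, F i * F j = if i = j then F i else 0) ∧
  (∑ i ∈ Finset.range (s + 1), F i = 1) ∧
  (F 0 = Matrix.of fun _ _ => 1 / (X.card : ℝ)) ∧
  (∀ i ≤ s, ∃ v : Polynomial ℝ, v.natDegree = i ∧
      F i = Matrix.of fun x y => (1 / (X.card : ℝ)) * v.eval ((X.card : ℝ) * F 1 x y))



-- ===== auxiliary lemmas =====
namespace Aux16

def eqv (X : Finset V) : (↥X → ℝ) ≃ₗ[ℝ] EuclideanSpace ℝ ↥X :=
  (WithLp.linearEquiv 2 ℝ (↥X → ℝ)).symm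

lemma inner_eqv (X : Finset V) (f g : ↥X → ℝ) :
    ⟪eqv X f, eqv X g⟫_ℝ = ∑ x, f x * g x := by
  simp [PiLp.inner_apply, RCLike.inner_apply, conj_trivial, eqv]
  exact Finset.sum_congr rfl fun x _ => mul_comm _ _

lemma inn_comm (X : Finset V) (f g : ↥X → ℝ) : inn X f g = inn X g f := by
  simp [inn, mul_comm]

lemma mem_perp (X : Finset V) (W : Submodule ℝ (↥X → ℝ)) (v : ↥X → ℝ) :
    v ∈ perp X W ↔ ∀ f ∈ W, inn X f v = 0 := by
  simp [perp, Submodule.mem_iInf, LinearMap.mem_ker, innL]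
  exact Iff.rfl

lemma perp_antitone (X : Finset V) {W W' : Submodule ℝ (↥X → ℝ)} (h : W ≤ W') :
    perp X W' ≤ perp X W := by
  intro v hv
  rw [mem_perp] at hv ⊢
  exact fun f hf => hv f (h hf)

lemma perp_eq (X : Finset V) (hne : X.Nonempty) (W : Submodule ℝ (↥X → ℝ)) :
    perp X W = ((W.map (eqv X).toLinearMap)ᗮ).comap ((eqv X).toLinearMap) := by
  have hn : (1 / (X.card : ℝ)) ≠ 0 := by
    have : (0:ℝ) < X.card := by exact_mod_cast Finset.card_pos.mpr hne
    positivity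
  ext v
  rw [mem_perp, Submodule.mem_comap, Submodule.mem_orthogonal]
  constructor
  · rintro h u ⟨f, hf, rfl⟩
    rw [LinearEquiv.coe_coe, inner_eqv]
    have := h f hf
    rw [inn] at this
    exact (mul_eq_zero.mp this).resolve_left hn
  · intro h f hf
    have := h ((eqv X) f) ⟨f, hf, rfl⟩
    rw [LinearEquiv.coe_coe, inner_eqv] at this
    rw [inn, this, mul_zero]

lemma perp_perp (X : Finset V) (hne : X.Nonempty) (W : Submodule ℝ (↥X → ℝ)) :
    perp X (perp X W) = W := by
  have hrange : LinearMap.range (eqv X).toLinearMap = ⊤ := LinearEquiv.range _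
  have hker : LinearMap.ker (eqv X).toLinearMap = ⊥ := LinearEquiv.ker _
  rw [perp_eq X hne, perp_eq X hne W, Submodule.map_comap_eq, hrange, top_inf_eq,
    Submodule.orthogonal_orthogonal, Submodule.comap_map_eq, hker, sup_bot_eq]

lemma sup_perp (X : Finset V) (hne : X.Nonempty) (W : Submodule ℝ (↥X → ℝ)) :
    W ⊔ perp X W = ⊤ := by
  have h1 : Submodule.map ((eqv X).toLinearMap) (W ⊔ perp X W) = ⊤ := by
    rw [Submodule.map_sup, perp_eq X hne, Submodule.map_comap_eq,
      LinearEquiv.range, top_inf_eq, Submodule.sup_orthogonal_of_hasOrthogonalProjection]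
  have := congrArg (Submodule.comap ((eqv X).toLinearMap)) h1
  rwa [Submodule.comap_map_eq, LinearEquiv.ker, sup_bot_eq, Submodule.comap_top] at this

lemma pol_mono (X : Finset V) {k l : ℕ} (h : k ≤ l) : Pol X k ≤ Pol X l := by
  apply Submodule.span_mono
  rintro f ⟨a, ha, p, hp, rfl⟩
  exact ⟨a, ha, p, hp.trans h, rfl⟩

lemma inner_euc (m : ℕ) (u p : EuclideanSpace ℝ (Fin m)) : ⟪u, p⟫_ℝ = ∑ r, u r * p r := by
  simp [PiLp.inner_apply, RCLike.inner_apply, conj_trivial]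
  exact Finset.sum_congr rfl fun x _ => mul_comm _ _

lemma pow_expand (m : ℕ) (u p : EuclideanSpace ℝ (Fin m)) (i : ℕ) :
    ⟪u, p⟫_ℝ ^ i = ∑ j : Fin i → Fin m, ∏ t, (u (j t) * p (j t)) := by
  rw [inner_euc]
  rw [show (∑ r, u r * p r) ^ i = ∏ _t : Fin i, (∑ r, u r * p r) by
    rw [Finset.prod_const, Finset.card_univ, Fintype.card_fin]]
  rw [Finset.prod_univ_sum]
  rw [Fintype.piFinset_univ]

lemma zonal_to_moment {m : ℕ} (X : Finset (EuclideanSpace ℝ (Fin m))) {i : ℕ} {v : ↥X → ℝ}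
    (h : ∀ a ∈ X, ∑ x : ↥X, ⟪a, (x : EuclideanSpace ℝ (Fin m))⟫_ℝ ^ i * v x = 0) :
    ∀ j : Fin i → Fin m, ∑ x : ↥X, v x * ∏ t, (x : EuclideanSpace ℝ (Fin m)) (j t) = 0 := by
  set c : (Fin i → Fin m) → ℝ := fun j => ∑ x : ↥X, v x * ∏ t, (x : EuclideanSpace ℝ (Fin m)) (j t)
    with hc
  have inner_eq : ∀ x : ↥X, (∑ j : Fin i → Fin m,
        (v x * ∏ t, (x : EuclideanSpace ℝ (Fin m)) (j t)) * c j)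
      = v x * ∑ y : ↥X, ⟪(x : EuclideanSpace ℝ (Fin m)), (y : EuclideanSpace ℝ (Fin m))⟫_ℝ ^ i * v y := by
    intro x
    calc (∑ j : Fin i → Fin m, (v x * ∏ t, (x : EuclideanSpace ℝ (Fin m)) (j t)) * c j)
        = ∑ j : Fin i → Fin m, ∑ y : ↥X,
            (v x * ∏ t, (x : EuclideanSpace ℝ (Fin m)) (j t))
              * (v y * ∏ t, (y : EuclideanSpace ℝ (Fin m)) (j t)) := by
          refine Finset.sum_congr rfl fun j _ => ?_
          rw [hc, Finset.mul_sum]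
      _ = ∑ y : ↥X, ∑ j : Fin i → Fin m,
            (v x * ∏ t, (x : EuclideanSpace ℝ (Fin m)) (j t))
              * (v y * ∏ t, (y : EuclideanSpace ℝ (Fin m)) (j t)) := Finset.sum_comm
      _ = v x * ∑ y : ↥X, ⟪(x : EuclideanSpace ℝ (Fin m)), (y : EuclideanSpace ℝ (Fin m))⟫_ℝ ^ i * v y := by
          rw [Finset.mul_sum]
          refine Finset.sum_congr rfl fun y _ => ?_
          rw [pow_expand, Finset.sum_mul, Finset.mul_sum]
          refine Finset.sum_congr rfl fun j _ => ?_
          rw [Finset.prod_mul_distrib]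
          ring
  have hsq : ∑ j : Fin i → Fin m, c j ^ 2 = 0 := by
    have expand : ∀ j : Fin i → Fin m, c j ^ 2
        = ∑ x : ↥X, (v x * ∏ t, (x : EuclideanSpace ℝ (Fin m)) (j t)) * c j := by
      intro j
      rw [sq, hc, Finset.sum_mul]
    rw [Finset.sum_congr rfl fun j _ => expand j, Finset.sum_comm]
    apply Finset.sum_eq_zero
    intro x _
    rw [inner_eq x, h (x : EuclideanSpace ℝ (Fin m)) x.2, mul_zero]
  intro j
  have h1 : ∀ j ∈ Finset.univ, (0:ℝ) ≤ c j ^ 2 := fun j _ => sq_nonneg _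
  have := (Finset.sum_eq_zero_iff_of_nonneg h1).mp hsq j (Finset.mem_univ j)
  exact (pow_eq_zero_iff two_ne_zero).mp this

lemma moment_to_mixed {m : ℕ} (X : Finset (EuclideanSpace ℝ (Fin m))) {i : ℕ} {v : ↥X → ℝ}
    (hmom : ∀ j : Fin i → Fin m, ∑ x : ↥X, v x * ∏ t, (x : EuclideanSpace ℝ (Fin m)) (j t) = 0)
    (g : Fin i → EuclideanSpace ℝ (Fin m)) :
    ∑ x : ↥X, (∏ t, ⟪g t, (x : EuclideanSpace ℝ (Fin m))⟫_ℝ) * v x = 0 := by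
  have expand : ∀ x : ↥X, (∏ t, ⟪g t, (x : EuclideanSpace ℝ (Fin m))⟫_ℝ)
      = ∑ j : Fin i → Fin m, ∏ t, (g t (j t) * (x : EuclideanSpace ℝ (Fin m)) (j t)) := by
    intro x
    rw [Finset.prod_congr rfl fun t _ => inner_euc m (g t) (x : EuclideanSpace ℝ (Fin m)),
      Finset.prod_univ_sum, Fintype.piFinset_univ]
  calc ∑ x : ↥X, (∏ t, ⟪g t, (x : EuclideanSpace ℝ (Fin m))⟫_ℝ) * v x
      = ∑ x : ↥X, ∑ j : Fin i → Fin m,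
          (∏ t, g t (j t)) * (v x * ∏ t, (x : EuclideanSpace ℝ (Fin m)) (j t)) := by
        refine Finset.sum_congr rfl fun x _ => ?_
        rw [expand x, Finset.sum_mul]
        refine Finset.sum_congr rfl fun j _ => ?_
        rw [Finset.prod_mul_distrib]
        ring
    _ = ∑ j : Fin i → Fin m, (∏ t, g t (j t))
          * ∑ x : ↥X, v x * ∏ t, (x : EuclideanSpace ℝ (Fin m)) (j t) := by
        rw [Finset.sum_comm]
        exact Finset.sum_congr rfl fun j _ => (Finset.mul_sum _ _ _).symm
    _ = 0 := by
        apply Finset.sum_eq_zero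
        intro j _
        rw [hmom j, mul_zero]


end Aux16


namespace Aux16

variable {V : Type*} [NormedAddCommGroup V] [InnerProductSpace ℝ V]

lemma mem_perp_pol (X : Finset V) (hne : X.Nonempty) (k : ℕ) (v : ↥X → ℝ) :
    v ∈ perp X (Pol X k) ↔
      ∀ a ∈ X, ∀ i ≤ k, ∑ x : ↥X, ⟪a, (x : V)⟫_ℝ ^ i * v x = 0 := by
  have hn : (1 / (X.card : ℝ)) ≠ 0 := by
    have : (0:ℝ) < X.card := by exact_mod_cast Finset.card_pos.mpr hne
    positivity
  constructor
  · intro hv a ha i hi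
    rw [mem_perp] at hv
    have hf : (fun x : ↥X => (Polynomial.X ^ i : Polynomial ℝ).eval ⟪a, (x : V)⟫_ℝ) ∈ Pol X k :=
      Submodule.subset_span ⟨a, ha, Polynomial.X ^ i, by simpa using hi, rfl⟩
    have h0 := hv _ hf
    rw [inn] at h0
    have h1 := (mul_eq_zero.mp h0).resolve_left hn
    rw [← h1]
    refine Finset.sum_congr rfl fun x _ => ?_
    rw [Polynomial.eval_pow, Polynomial.eval_X]
  · intro hv
    rw [mem_perp]
    have hker : Pol X k ≤ LinearMap.ker (innL X v) := by
      rw [Pol, Submodule.span_le]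
      rintro f ⟨a, ha, p, hp, rfl⟩
      rw [SetLike.mem_coe, LinearMap.mem_ker]
      show inn X v _ = 0
      rw [inn]
      have hsum : ∑ x : ↥X, v x * p.eval ⟪a, (x : V)⟫_ℝ = 0 := by
        have hev : ∀ x : ↥X, p.eval ⟪a, (x : V)⟫_ℝ
            = ∑ i ∈ Finset.range (k+1), p.coeff i * ⟪a, (x : V)⟫_ℝ ^ i := fun x =>
          Polynomial.eval_eq_sum_range' (Nat.lt_succ_of_le hp) _
        calc ∑ x : ↥X, v x * p.eval ⟪a, (x : V)⟫_ℝ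
            = ∑ x : ↥X, ∑ i ∈ Finset.range (k+1),
                p.coeff i * (⟪a, (x : V)⟫_ℝ ^ i * v x) := by
              refine Finset.sum_congr rfl fun x _ => ?_
              rw [hev x, Finset.mul_sum]
              exact Finset.sum_congr rfl fun i _ => by ring
          _ = ∑ i ∈ Finset.range (k+1), p.coeff i
                * ∑ x : ↥X, ⟪a, (x : V)⟫_ℝ ^ i * v x := by
              rw [Finset.sum_comm]
              exact Finset.sum_congr rfl fun i _ => (Finset.mul_sum _ _ _).symm
          _ = 0 := Finset.sum_eq_zero fun i hi => by
              rw [hv a ha i (Nat.lt_succ_iff.mp (Finset.mem_range.mp hi)), mul_zero]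
      rw [hsum, mul_zero]
    intro f hf
    rw [inn_comm]
    exact hker hf

lemma plateau {m : ℕ} (X : Finset (EuclideanSpace ℝ (Fin m))) (hne : X.Nonempty) (k : ℕ)
    (hplat : Pol X k = Pol X (k+1)) : Pol X (k+1) = Pol X (k+2) := by
  have hle : perp X (Pol X (k+1)) ≤ perp X (Pol X (k+2)) := by
    intro v hv
    rw [mem_perp_pol X hne] at hv ⊢
    have hmom : ∀ i ≤ k+1, ∀ j : Fin i → Fin m,
        ∑ x : ↥X, v x * ∏ t, (x : EuclideanSpace ℝ (Fin m)) (j t) = 0 := fun i hi =>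
      zonal_to_moment X (fun a ha => hv a ha i hi)
    intro a ha i hi
    rcases Nat.lt_or_ge i (k+2) with hlt | hge
    · exact hv a ha i (Nat.lt_succ_iff.mp hlt)
    have hik : i = k+2 := le_antisymm hi hge
    subst hik
    set w : ↥X → ℝ := fun x => ⟪a, (x : EuclideanSpace ℝ (Fin m))⟫_ℝ * v x with hwdef
    have hw : w ∈ perp X (Pol X k) := by
      rw [mem_perp_pol X hne]
      intro b hb i' hi'
      have key := moment_to_mixed X (hmom (i'+1) (by omega))
        (Fin.cons a (fun _ => b) : Fin (i'+1) → EuclideanSpace ℝ (Fin m))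
      rw [← key]
      refine Finset.sum_congr rfl fun x _ => ?_
      rw [Fin.prod_univ_succ]
      simp only [Fin.cons_zero, Fin.cons_succ, Fin.prod_const]
      rw [hwdef]
      ring
    rw [hplat, mem_perp_pol X hne] at hw
    have h2 := hw a ha (k+1) le_rfl
    rw [← h2]
    refine Finset.sum_congr rfl fun x _ => ?_
    rw [hwdef]
    ring
  have heq := le_antisymm hle (perp_antitone X (pol_mono X (by omega)))
  calc Pol X (k+1) = perp X (perp X (Pol X (k+1))) := (perp_perp X hne _).symm
    _ = perp X (perp X (Pol X (k+2))) := by rw [heq]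
    _ = Pol X (k+2) := perp_perp X hne _

lemma exists_top (X : Finset V) (hne : X.Nonempty) (μ : ℝ) (hsph : ∀ x ∈ X, ⟪x, x⟫_ℝ = μ) :
    Pol X X.card = ⊤ := by
  have key : ∀ a : ↥X, ∃ f ∈ Pol X X.card, f a ≠ 0 ∧ ∀ x : ↥X, x ≠ a → f x = 0 := by
    intro a
    have hxa : ∀ x : ↥X, ⟪(a : V), (x : V)⟫_ℝ = μ → x = a := by
      intro x hx
      have hcomm : ⟪(x : V), (a : V)⟫_ℝ = μ := by rw [real_inner_comm]; exact hx
      have h0 : ⟪(a : V) - (x : V), (a : V) - (x : V)⟫_ℝ = 0 := by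
        rw [inner_sub_left, inner_sub_right, inner_sub_right,
          hsph _ a.2, hsph _ x.2, hx, hcomm]
        ring
      have h1 : (a : V) - (x : V) = 0 := inner_self_eq_zero.mp h0
      exact (Subtype.ext (sub_eq_zero.mp h1)).symm
    set B : Finset ℝ := (X.image fun y => ⟪(a : V), y⟫_ℝ).erase μ with hB
    set pA : Polynomial ℝ := ∏ α ∈ B, (Polynomial.X - Polynomial.C α) with hpA
    have hdeg : pA.natDegree ≤ X.card := by
      rw [hpA, Polynomial.natDegree_prod_of_monic _ _ (fun α _ => Polynomial.monic_X_sub_C α)]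
      simp only [Polynomial.natDegree_X_sub_C]
      rw [Finset.sum_const, smul_eq_mul, mul_one]
      exact le_trans (Finset.card_erase_le) Finset.card_image_le
    refine ⟨fun x : ↥X => pA.eval ⟪(a : V), (x : V)⟫_ℝ,
      Submodule.subset_span ⟨a, a.2, pA, hdeg, rfl⟩, ?_, ?_⟩
    · show Polynomial.eval (⟪(a : V), (a : V)⟫_ℝ) pA ≠ 0
      rw [hpA, Polynomial.eval_prod, Finset.prod_ne_zero_iff]
      intro α hα
      simp only [Polynomial.eval_sub, Polynomial.eval_X, Polynomial.eval_C]
      rw [hsph _ a.2]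
      exact sub_ne_zero.mpr (Ne.symm (Finset.ne_of_mem_erase hα))
    · intro x hx
      show Polynomial.eval (⟪(a : V), (x : V)⟫_ℝ) pA = 0
      rw [hpA, Polynomial.eval_prod]
      apply Finset.prod_eq_zero (i := ⟪(a : V), (x : V)⟫_ℝ)
      · rw [hB, Finset.mem_erase]
        exact ⟨fun h => hx (hxa x h), Finset.mem_image.mpr ⟨(x : V), x.2, rfl⟩⟩
      · simp
  rw [eq_top_iff]
  intro g _
  choose F hFmem hFne hFzero using key
  have hg : g = ∑ a : ↥X, (g a / F a a) • F a := by
    funext x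
    rw [Finset.sum_apply]
    rw [Finset.sum_eq_single x]
    · simp only [Pi.smul_apply, smul_eq_mul]
      exact (div_mul_cancel₀ (g x) (hFne x)).symm
    · intro a _ hax
      simp only [Pi.smul_apply, smul_eq_mul]
      rw [hFzero a x (Ne.symm hax), mul_zero]
    · intro h; exact absurd (Finset.mem_univ x) h
  rw [hg]
  exact Submodule.sum_mem _ fun a _ => Submodule.smul_mem _ _ (hFmem a)

lemma harm_le_pol (X : Finset V) (i : ℕ) : Harm X i ≤ Pol X i := by
  cases i with
  | zero => exact le_rfl
  | succ n => exact inf_le_left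

end Aux16

theorem statement_16 {m : ℕ} (X : Finset (EuclideanSpace ℝ (Fin m))) (hne : X.Nonempty)
    (hsph : onSphere (m : ℝ) X) (hdes : IsTwoDesign X) :
    (∀ j ≤ degS X, Harm X j ≠ ⊥) ∧
    (∀ i j, i ≠ j → ∀ f ∈ Harm X i, ∀ g ∈ Harm X j, inn X f g = 0) ∧
    (⨆ i ∈ Finset.range (degS X + 1), Harm X i) = ⊤ := by
  classical
  have htop : Pol X X.card = ⊤ := Aux16.exists_top X hne (m : ℝ) hsph
  have hSmem : Pol X (degS X) = ⊤ := Nat.sInf_mem (⟨X.card, htop⟩ : {i | Pol X i = ⊤}.Nonempty)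
  have stab : ∀ k, Pol X k = Pol X (k+1) → ∀ d, Pol X (k+d) = Pol X (k+d+1) := by
    intro k hk d
    induction d with
    | zero => exact hk
    | succ d ih => exact Aux16.plateau X hne (k+d) ih
  have chain : ∀ k, Pol X k = Pol X (k+1) → ∀ d, Pol X (k+d) = Pol X k := by
    intro k hk d
    induction d with
    | zero => rfl
    | succ d ih => rw [← ih]; exact (stab k hk d).symm
  have strict : ∀ j, j < degS X → Pol X j ≠ Pol X (j+1) := by
    intro j hj hEq
    have h1 : Pol X (j + (degS X - j)) = Pol X j := chain j hEq _
    rw [Nat.add_sub_cancel' hj.le] at h1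
    have h2 : Pol X j = ⊤ := by rw [← h1]; exact hSmem
    exact absurd (Nat.sInf_le h2) (not_le.mpr hj)
  refine ⟨?_, ?_, ?_⟩
  · intro j hj
    cases j with
    | zero =>
      show Pol X 0 ≠ ⊥
      intro hbot
      obtain ⟨a, ha⟩ := hne
      have hmem1 : (fun _ : ↥X => ((1 : Polynomial ℝ).eval (0:ℝ))) ∈ Pol X 0 := by
        refine Submodule.subset_span ⟨a, ha, 1, by simp, ?_⟩
        funext x
        simp
      rw [hbot, Submodule.mem_bot] at hmem1
      have := congrFun hmem1 ⟨a, ha⟩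
      simp at this
    | succ j =>
      intro hbot
      have hlt : j < degS X := lt_of_lt_of_le (Nat.lt_succ_self j) hj
      have heq : Pol X (j+1) = Pol X j := by
        calc Pol X (j+1) = (Pol X j ⊔ perp X (Pol X j)) ⊓ Pol X (j+1) := by
              rw [Aux16.sup_perp X hne, top_inf_eq]
          _ = Pol X j ⊔ (perp X (Pol X j) ⊓ Pol X (j+1)) :=
              sup_inf_assoc_of_le _ (Aux16.pol_mono X (Nat.le_succ j))
          _ = Pol X j ⊔ (Pol X (j+1) ⊓ perp X (Pol X j)) := by rw [inf_comm]
          _ = Pol X j ⊔ Harm X (j+1) := rfl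
          _ = Pol X j := by rw [hbot, sup_bot_eq]
      exact strict j hlt heq.symm
  · have key : ∀ i j, i < j → ∀ f ∈ Harm X i, ∀ g ∈ Harm X j, inn X f g = 0 := by
      intro i j hij f hf g hg
      obtain ⟨j', rfl⟩ : ∃ j', j = j'+1 := ⟨j-1, by omega⟩
      have hf' : f ∈ Pol X j' := Aux16.pol_mono X (by omega) (Aux16.harm_le_pol X i hf)
      have hg' : g ∈ perp X (Pol X j') := (Submodule.mem_inf.mp hg).2
      exact (Aux16.mem_perp X _ g).mp hg' f hf'
    intro i j hij f hf g hg
    rcases lt_or_gt_of_ne hij with h | h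
    · exact key i j h f hf g hg
    · rw [Aux16.inn_comm]
      exact key j i h g hg f hf
  · have main : ∀ k, (⨆ i ∈ Finset.range (k+1), Harm X i) = Pol X k := by
      intro k
      induction k with
      | zero => simp [Harm]
      | succ k ih =>
        rw [Finset.range_add_one, Finset.iSup_insert, ih]
        calc Harm X (k+1) ⊔ Pol X k = Pol X k ⊔ (Pol X (k+1) ⊓ perp X (Pol X k)) := by
              rw [sup_comm]; rfl
          _ = Pol X k ⊔ (perp X (Pol X k) ⊓ Pol X (k+1)) := by rw [inf_comm]
          _ = (Pol X k ⊔ perp X (Pol X k)) ⊓ Pol X (k+1) :=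
              (sup_inf_assoc_of_le _ (Aux16.pol_mono X (Nat.le_succ k))).symm
          _ = Pol X (k+1) := by rw [Aux16.sup_perp X hne, top_inf_eq]
    rw [main (degS X), hSmem]


end
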